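/- Let G be a group with finite symmetric generating set X and let L = Geo(G,X). If w ∼_L w² for every nonempty word w over X, then for every geodesic word w over X and every integer m ≥ 1, the word w^m is geodesic. In particular, G is torsion-free. -/
import Mathlib


/-- `pre_{k-1}`, `suf_{k-1}` and `sub_k` agree: the equivalence `∼_k` on words. -/
def SimK {A : Type*} (k : ℕ) (u v : List A) : Prop :=
  u.take (k - 1) = v.take (k - 1) ∧
  u.drop (u.length - (k - 1)) = v.drop (v.length - (k - 1)) ∧
  ∀ s : List A, s.length = k → (s <:+: u ↔ s <:+: v)

/-- A language `L` is `k`-locally testable if membership is invariant under `∼_k`. -/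
def LocallyTestable {A : Type*} (k : ℕ) (L : Set (List A)) : Prop :=
  ∀ u v : List A, SimK k u v → (u ∈ L ↔ v ∈ L)

/-- The syntactic congruence of a language: `u ∼_L v` iff `sut ∈ L ↔ svt ∈ L` for all `s, t`. -/
def SynCong {A : Type*} (L : Set (List A)) (u v : List A) : Prop :=
  ∀ s t : List A, s ++ u ++ t ∈ L ↔ s ++ v ++ t ∈ L

/-- The element of `G` represented by a word over the generating set `X`. -/
def wordProd {G : Type*} [Group G] {X : Set G} (w : List X) : G :=
  (w.map Subtype.val).prod

/-- A word over `X` is geodesic if no word representing the same element is shorter. -/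
def IsGeodesic {G : Type*} [Group G] (X : Set G) (w : List X) : Prop :=
  ∀ v : List X, wordProd v = wordProd w → w.length ≤ v.length

/-- The language of all geodesic words over `X`. -/
def Geo {G : Type*} [Group G] (X : Set G) : Set (List X) :=
  {w | IsGeodesic X w}

/-- The `j`-th power of a word in the free monoid (concatenation of `j` copies). -/
def listPow {A : Type*} (w : List A) : ℕ → List A
  | 0 => []
  | n + 1 => w ++ listPow w n

lemma wordProd_append {G : Type*} [Group G] {X : Set G} (u v : List X) :
    wordProd (u ++ v) = wordProd u * wordProd v := by
  simp [wordProd]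

lemma wordProd_listPow {G : Type*} [Group G] {X : Set G} (w : List X) (n : ℕ) :
    wordProd (listPow w n) = (wordProd w) ^ n := by
  induction n with
  | zero => simp [listPow, wordProd]
  | succ k ih => rw [listPow, wordProd_append, ih, pow_succ']

lemma exists_word {G : Type*} [Group G] {X : Set G}
    (hsym : ∀ x ∈ X, x⁻¹ ∈ X) (hgen : Subgroup.closure X = ⊤) (g : G) :
    ∃ w : List X, wordProd w = g := by
  have hg : g ∈ Subgroup.closure X := by rw [hgen]; trivial
  induction hg using Subgroup.closure_induction with
  | mem x hx => exact ⟨[⟨x, hx⟩], by simp [wordProd]⟩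
  | one => exact ⟨[], by simp [wordProd]⟩
  | mul a b _ _ iha ihb =>
    obtain ⟨u, hu⟩ := iha
    obtain ⟨v, hv⟩ := ihb
    exact ⟨u ++ v, by rw [wordProd_append, hu, hv]⟩
  | inv a _ iha =>
    obtain ⟨u, hu⟩ := iha
    refine ⟨(u.map fun x => (⟨x.1⁻¹, hsym _ x.2⟩ : X)).reverse, ?_⟩
    subst hu
    unfold wordProd
    rw [List.map_reverse, List.map_map]
    rw [List.prod_inv_reverse]
    congr 1
    · induction u with
      | nil => simp
      | cons a l ih => simp_all

/-- If the syntactic semigroup of `Geo(G,X)` is idempotent, then every power of a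
geodesic word is geodesic; in particular `G` is torsion-free. -/
theorem stmt14 {G : Type*} [Group G] (X : Set G)
    (hfin : X.Finite) (hsym : ∀ x ∈ X, x⁻¹ ∈ X) (hgen : Subgroup.closure X = ⊤)
    (hidem : ∀ w : List X, w ≠ [] → SynCong (Geo X) w (w ++ w)) :
    (∀ w : List X, IsGeodesic X w → ∀ m : ℕ, 1 ≤ m → IsGeodesic X (listPow w m)) ∧
    (∀ g : G, g ≠ 1 → ¬ IsOfFinOrder g) := by
  classical
  have hnil : IsGeodesic X ([] : List X) := by
    intro v _; simp
  have hpow : ∀ w : List X, IsGeodesic X w → ∀ m : ℕ, 1 ≤ m → IsGeodesic X (listPow w m) := by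
    intro w hw m hm
    by_cases hwnil : w = []
    · subst hwnil
      have : ∀ n, listPow ([] : List X) n = [] := by
        intro n; induction n with
        | zero => rfl
        | succ k ih => simp [listPow, ih]
      rw [this]; exact hnil
    · obtain ⟨n, rfl⟩ := Nat.exists_eq_add_of_le hm
      clear hm
      induction n with
      | zero =>
        have : listPow w 1 = w := by simp [listPow]
        rwa [this]
      | succ k ih =>
        have hstep := hidem w hwnil [] (listPow w k)
        have h1 : ([] : List X) ++ w ++ listPow w k = listPow w (1 + k) := by
          simp [listPow, Nat.add_comm]
        have h2 : ([] : List X) ++ (w ++ w) ++ listPow w k = listPow w (1 + (k + 1)) := by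
          simp [listPow, Nat.add_comm, List.append_assoc]
        rw [h1, h2] at hstep
        exact (hstep.mp ih : listPow w (1 + (k + 1)) ∈ Geo X)
  refine ⟨hpow, ?_⟩
  intro g hg hfo
  obtain ⟨n, hn, hgn⟩ := isOfFinOrder_iff_pow_eq_one.mp hfo
  -- get a geodesic word representing g
  obtain ⟨w0, hw0⟩ := exists_word hsym hgen g
  have hS : ∃ k : ℕ, ∃ v : List X, v.length = k ∧ wordProd v = g :=
    ⟨w0.length, w0, rfl, hw0⟩
  obtain ⟨w, hwlen, hwprod⟩ := Nat.find_spec hS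
  have hgeo : IsGeodesic X w := by
    intro v hv
    rw [hwprod] at hv
    rw [hwlen]
    exact Nat.find_min' hS ⟨v, rfl, hv⟩
  have hwne : w ≠ [] := by
    intro h
    apply hg
    rw [← hwprod, h]
    simp [wordProd]
  have hpg := hpow w hgeo n hn
  have hprod : wordProd (listPow w n) = 1 := by
    rw [wordProd_listPow, hwprod, hgn]
  have hle := hpg [] (by rw [hprod]; simp [wordProd])
  have hlen : 0 < (listPow w n).length := by
    obtain ⟨k, rfl⟩ := Nat.exists_eq_add_of_le hn
    rw [Nat.add_comm, listPow]
    simp only [List.length_append]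
    have : 0 < w.length := List.length_pos_iff.mpr hwne
    omega
  simp only [List.length_nil] at hle
  omega
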